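/- Under the permutation null, Cov(α_1(t), β_2(t)) = C_{12}/(n(n-1)(n-2)(n-3)) − k̄_1 k̄_2, where k̄_x = (1/(n(n-1))) Σ_{i≠j} k_{xij} for x ∈ {1,2}. -/

import Mathlib

open Finset

/-- Expectation under the uniform permutation null distribution. -/
noncomputable def permExp (n : ℕ) (f : Equiv.Perm (Fin n) → ℝ) : ℝ :=
  (∑ π : Equiv.Perm (Fin n), f π) / (Fintype.card (Equiv.Perm (Fin n)) : ℝ)

/-- Within-segment ordered-pair kernel average. -/
noncomputable def alphaStat (n t : ℕ) (K : Fin n → Fin n → ℝ)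
    (π : Equiv.Perm (Fin n)) : ℝ :=
  (1 / ((t : ℝ) * ((t : ℝ) - 1))) *
    ∑ i : Fin n, ∑ j : Fin n,
      if i ≠ j ∧ (i : ℕ) < t ∧ (j : ℕ) < t then K (π i) (π j) else 0

/-- After-segment ordered-pair kernel average. -/
noncomputable def betaStat (n t : ℕ) (K : Fin n → Fin n → ℝ)
    (π : Equiv.Perm (Fin n)) : ℝ :=
  (1 / (((n : ℝ) - t) * ((n : ℝ) - t - 1))) *
    ∑ i : Fin n, ∑ j : Fin n,
      if i ≠ j ∧ t ≤ (i : ℕ) ∧ t ≤ (j : ℕ) then K (π i) (π j) else 0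

section Aux
variable {n t : ℕ}
variable {n : ℕ}

lemma exists_perm_map {m n : ℕ} (f g : Fin m → Fin n) (hf : Function.Injective f)
    (hg : Function.Injective g) : ∃ σ : Equiv.Perm (Fin n), ∀ x, σ (f x) = g x := by
  classical
  let e : {x // x ∈ Set.range f} ≃ {x // x ∈ Set.range g} :=
    (Equiv.ofInjective f hf).symm.trans (Equiv.ofInjective g hg)
  refine ⟨e.extendSubtype, fun x => ?_⟩
  rw [e.extendSubtype_apply_of_mem (f x) ⟨x, rfl⟩]
  simp [e]

lemma pair_inj {i j : Fin n} (h : i ≠ j) : Function.Injective ![i, j] := by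
  intro x y hxy
  fin_cases x <;> fin_cases y <;> simp_all [Fin.ext_iff]

lemma exists_perm_pair {i j a b : Fin n} (h1 : i ≠ j) (g1 : a ≠ b) :
    ∃ σ : Equiv.Perm (Fin n), σ i = a ∧ σ j = b := by
  obtain ⟨σ, hσ⟩ := exists_perm_map ![i,j] ![a,b] (pair_inj h1) (pair_inj g1)
  exact ⟨σ, hσ 0, hσ 1⟩

lemma quad_inj {i j u v : Fin n} (h1 : i ≠ j) (h2 : u ≠ v) (h3 : u ≠ i)
    (h4 : u ≠ j) (h5 : v ≠ i) (h6 : v ≠ j) : Function.Injective ![i, j, u, v] := by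
  intro x y h
  fin_cases x <;> fin_cases y <;> simp_all [Fin.ext_iff]

lemma exists_perm_quad {i j u v a b c d : Fin n}
    (h1 : i ≠ j) (h2 : u ≠ v) (h3 : u ≠ i) (h4 : u ≠ j) (h5 : v ≠ i) (h6 : v ≠ j)
    (g1 : a ≠ b) (g2 : c ≠ d) (g3 : c ≠ a) (g4 : c ≠ b) (g5 : d ≠ a) (g6 : d ≠ b) :
    ∃ σ : Equiv.Perm (Fin n), σ i = a ∧ σ j = b ∧ σ u = c ∧ σ v = d := by
  obtain ⟨σ, hσ⟩ := exists_perm_map ![i,j,u,v] ![a,b,c,d]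
    (quad_inj h1 h2 h3 h4 h5 h6) (quad_inj g1 g2 g3 g4 g5 g6)
  exact ⟨σ, hσ 0, hσ 1, hσ 2, hσ 3⟩

lemma pair_const (F : Fin n → Fin n → ℝ) {i j a b : Fin n}
    (σ : Equiv.Perm (Fin n)) (h1 : σ a = i) (h2 : σ b = j) :
    ∑ π : Equiv.Perm (Fin n), F (π i) (π j)
      = ∑ π : Equiv.Perm (Fin n), F (π a) (π b) := by
  calc ∑ π : Equiv.Perm (Fin n), F (π i) (π j)
      = ∑ π : Equiv.Perm (Fin n), F ((π * σ) a) ((π * σ) b) := by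
        simp [Equiv.Perm.mul_apply, h1, h2]
    _ = ∑ π : Equiv.Perm (Fin n), F (π a) (π b) :=
        Equiv.sum_comp (Equiv.mulRight σ) (fun π => F (π a) (π b))

lemma quad_const (F : Fin n → Fin n → Fin n → Fin n → ℝ) {i j u v a b c d : Fin n}
    (σ : Equiv.Perm (Fin n)) (h1 : σ a = i) (h2 : σ b = j) (h3 : σ c = u) (h4 : σ d = v) :
    ∑ π : Equiv.Perm (Fin n), F (π i) (π j) (π u) (π v)
      = ∑ π : Equiv.Perm (Fin n), F (π a) (π b) (π c) (π d) := by
  calc ∑ π : Equiv.Perm (Fin n), F (π i) (π j) (π u) (π v)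
      = ∑ π : Equiv.Perm (Fin n), F ((π * σ) a) ((π * σ) b) ((π * σ) c) ((π * σ) d) := by
        simp [Equiv.Perm.mul_apply, h1, h2, h3, h4]
    _ = ∑ π : Equiv.Perm (Fin n), F (π a) (π b) (π c) (π d) :=
        Equiv.sum_comp (Equiv.mulRight σ) (fun π => F (π a) (π b) (π c) (π d))

lemma sum_pair_perm (F : Fin n → Fin n → ℝ) (π : Equiv.Perm (Fin n)) :
    (∑ a : Fin n, ∑ b : Fin n, if a ≠ b then F (π a) (π b) else 0)
    = ∑ a : Fin n, ∑ b : Fin n, if a ≠ b then F a b else 0 := by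
  refine Fintype.sum_equiv π _ _ fun a => ?_
  refine Fintype.sum_equiv π _ _ fun b => ?_
  simp [Ne, EmbeddingLike.apply_eq_iff_eq]

lemma sum_quad_perm (F : Fin n → Fin n → Fin n → Fin n → ℝ) (π : Equiv.Perm (Fin n)) :
    (∑ a : Fin n, ∑ b : Fin n, ∑ c : Fin n, ∑ d : Fin n,
      if a ≠ b ∧ c ≠ d ∧ c ≠ a ∧ c ≠ b ∧ d ≠ a ∧ d ≠ b then F (π a) (π b) (π c) (π d) else 0)
    = ∑ a : Fin n, ∑ b : Fin n, ∑ c : Fin n, ∑ d : Fin n,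
      if a ≠ b ∧ c ≠ d ∧ c ≠ a ∧ c ≠ b ∧ d ≠ a ∧ d ≠ b then F a b c d else 0 := by
  refine Fintype.sum_equiv π _ _ fun a => ?_
  refine Fintype.sum_equiv π _ _ fun b => ?_
  refine Fintype.sum_equiv π _ _ fun c => ?_
  refine Fintype.sum_equiv π _ _ fun d => ?_
  simp [Ne, EmbeddingLike.apply_eq_iff_eq]

lemma sum_if_const {α : Type*} [Fintype α] {P : Prop} [Decidable P] (f : α → ℝ) :
    (∑ x : α, if P then f x else 0) = if P then ∑ x : α, f x else 0 := by
  split_ifs <;> simp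
variable {n t : ℕ}

lemma sum_ne_one (a : Fin n) : (∑ x : Fin n, if x ≠ a then (1:ℝ) else 0) = n - 1 := by
  have : ∀ x : Fin n, (if x ≠ a then (1:ℝ) else 0) = 1 - (if x = a then 1 else 0) := by
    intro x; by_cases h : x = a <;> simp [h]
  rw [Finset.sum_congr rfl fun x _ => this x, Finset.sum_sub_distrib]
  simp

lemma pair_count : (∑ a : Fin n, ∑ b : Fin n, if a ≠ b then (1:ℝ) else 0)
    = n * (n - 1) := by
  have h : ∀ a : Fin n, (∑ b : Fin n, if a ≠ b then (1:ℝ) else 0) = n - 1 := fun a =>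
    (Finset.sum_congr rfl fun b _ => by simp [ne_comm]).trans (sum_ne_one a)
  rw [Finset.sum_congr rfl fun a _ => h a, Finset.sum_const, Finset.card_univ,
    Fintype.card_fin, nsmul_eq_mul]

lemma sum_ne_two {a b : Fin n} (hab : a ≠ b) :
    (∑ x : Fin n, if x ≠ a ∧ x ≠ b then (1:ℝ) else 0) = n - 2 := by
  have : ∀ x : Fin n, (if x ≠ a ∧ x ≠ b then (1:ℝ) else 0)
      = 1 - (if x = a then 1 else 0) - (if x = b then 1 else 0) := by
    intro x; by_cases h : x = a <;> by_cases h' : x = b <;> simp_all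
  rw [Finset.sum_congr rfl fun x _ => this x, Finset.sum_sub_distrib, Finset.sum_sub_distrib]
  simp; ring

lemma sum_ne_three {a b c : Fin n} (hab : a ≠ b) (hca : c ≠ a) (hcb : c ≠ b) :
    (∑ x : Fin n, if x ≠ a ∧ x ≠ b ∧ x ≠ c then (1:ℝ) else 0) = n - 3 := by
  have : ∀ x : Fin n, (if x ≠ a ∧ x ≠ b ∧ x ≠ c then (1:ℝ) else 0)
      = 1 - (if x = a then 1 else 0) - (if x = b then 1 else 0) - (if x = c then 1 else 0) := by
    intro x; by_cases h : x = a <;> by_cases h' : x = b <;> by_cases h'' : x = c <;> simp_all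
  rw [Finset.sum_congr rfl fun x _ => this x, Finset.sum_sub_distrib, Finset.sum_sub_distrib,
    Finset.sum_sub_distrib]
  simp; ring

lemma ite_one_mul' {P : Prop} [Decidable P] (c : ℝ) :
    (if P then c else 0) = (if P then 1 else 0) * c := by split_ifs <;> simp

lemma triple_count : (∑ a : Fin n, ∑ b : Fin n, ∑ c : Fin n,
    if a ≠ b ∧ c ≠ a ∧ c ≠ b then (1:ℝ) else 0) = n * (n - 1) * (n - 2) := by
  have h : ∀ a b : Fin n, (∑ c : Fin n, if a ≠ b ∧ c ≠ a ∧ c ≠ b then (1:ℝ) else 0)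
      = (if a ≠ b then (1:ℝ) else 0) * ((n:ℝ) - 2) := by
    intro a b
    by_cases hab : a ≠ b
    · have e : ∀ c : Fin n, (if a ≠ b ∧ c ≠ a ∧ c ≠ b then (1:ℝ) else 0)
          = if c ≠ a ∧ c ≠ b then (1:ℝ) else 0 := fun c => if_congr (and_iff_right hab) rfl rfl
      rw [Finset.sum_congr rfl fun c _ => e c, sum_ne_two hab, if_pos hab, one_mul]
    · simp [hab]
  calc (∑ a : Fin n, ∑ b : Fin n, ∑ c : Fin n,
      if a ≠ b ∧ c ≠ a ∧ c ≠ b then (1:ℝ) else 0)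
      = ∑ a : Fin n, ∑ b : Fin n, (if a ≠ b then (1:ℝ) else 0) * ((n:ℝ) - 2) :=
        Finset.sum_congr rfl fun a _ => Finset.sum_congr rfl fun b _ => h a b
    _ = (∑ a : Fin n, ∑ b : Fin n, if a ≠ b then (1:ℝ) else 0) * ((n:ℝ) - 2) := by
        rw [Finset.sum_mul]; exact Finset.sum_congr rfl fun a _ => (Finset.sum_mul _ _ _).symm
    _ = n * (n - 1) * (n - 2) := by rw [pair_count]

lemma quad_count : (∑ a : Fin n, ∑ b : Fin n, ∑ c : Fin n, ∑ d : Fin n,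
    if a ≠ b ∧ c ≠ d ∧ c ≠ a ∧ c ≠ b ∧ d ≠ a ∧ d ≠ b then (1:ℝ) else 0)
    = n * (n - 1) * (n - 2) * (n - 3) := by
  have h : ∀ a b c : Fin n, (∑ d : Fin n,
      if a ≠ b ∧ c ≠ d ∧ c ≠ a ∧ c ≠ b ∧ d ≠ a ∧ d ≠ b then (1:ℝ) else 0)
      = (if a ≠ b ∧ c ≠ a ∧ c ≠ b then (1:ℝ) else 0) * ((n:ℝ) - 3) := by
    intro a b c
    by_cases h3 : a ≠ b ∧ c ≠ a ∧ c ≠ b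
    · obtain ⟨hab, hca, hcb⟩ := h3
      have : ∀ d : Fin n, (if a ≠ b ∧ c ≠ d ∧ c ≠ a ∧ c ≠ b ∧ d ≠ a ∧ d ≠ b then (1:ℝ) else 0)
          = if d ≠ a ∧ d ≠ b ∧ d ≠ c then (1:ℝ) else 0 := by
        intro d
        refine if_congr ?_ rfl rfl
        constructor
        · rintro ⟨_, h2, _, _, h5, h6⟩; exact ⟨h5, h6, h2.symm⟩
        · rintro ⟨h5, h6, h2⟩; exact ⟨hab, h2.symm, hca, hcb, h5, h6⟩
      rw [Finset.sum_congr rfl fun d _ => this d, sum_ne_three hab hca hcb,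
        if_pos ⟨hab, hca, hcb⟩, one_mul]
    · have : ∀ d : Fin n,
          (if a ≠ b ∧ c ≠ d ∧ c ≠ a ∧ c ≠ b ∧ d ≠ a ∧ d ≠ b then (1:ℝ) else 0) = 0 := by
        intro d
        rw [if_neg]; tauto
      rw [Finset.sum_congr rfl fun d _ => this d]
      simp [h3]
  calc (∑ a : Fin n, ∑ b : Fin n, ∑ c : Fin n, ∑ d : Fin n,
      if a ≠ b ∧ c ≠ d ∧ c ≠ a ∧ c ≠ b ∧ d ≠ a ∧ d ≠ b then (1:ℝ) else 0)
      = ∑ a : Fin n, ∑ b : Fin n, ∑ c : Fin n,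
          (if a ≠ b ∧ c ≠ a ∧ c ≠ b then (1:ℝ) else 0) * ((n:ℝ) - 3) :=
        Finset.sum_congr rfl fun a _ => Finset.sum_congr rfl fun b _ =>
          Finset.sum_congr rfl fun c _ => h a b c
    _ = (∑ a : Fin n, ∑ b : Fin n, ∑ c : Fin n,
          if a ≠ b ∧ c ≠ a ∧ c ≠ b then (1:ℝ) else 0) * ((n:ℝ) - 3) := by
        rw [Finset.sum_mul]
        refine Finset.sum_congr rfl fun a _ => ?_
        rw [Finset.sum_mul]
        exact Finset.sum_congr rfl fun b _ => (Finset.sum_mul _ _ _).symm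
    _ = n * (n - 1) * (n - 2) * (n - 3) := by rw [triple_count]

lemma sum_ind_lt (htn : t ≤ n) :
    (∑ i : Fin n, if (i : ℕ) < t then (1:ℝ) else 0) = t := by
  rw [Fin.sum_univ_eq_sum_range (fun i => if i < t then (1:ℝ) else 0), Finset.sum_boole]
  congr 1
  rw [show (Finset.range n).filter (fun i => i < t) = Finset.range t from ?_, Finset.card_range]
  ext x
  simp only [Finset.mem_filter, Finset.mem_range]
  omega

lemma sum_ind_ge (htn : t ≤ n) :
    (∑ i : Fin n, if t ≤ (i : ℕ) then (1:ℝ) else 0) = n - t := by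
  have : ∀ i : Fin n, (if t ≤ (i : ℕ) then (1:ℝ) else 0)
      = 1 - (if (i : ℕ) < t then 1 else 0) := by
    intro i
    by_cases h : (i : ℕ) < t
    · rw [if_pos h, if_neg (by omega)]; ring
    · rw [if_neg h, if_pos (by omega)]; ring
  rw [Finset.sum_congr rfl fun i _ => this i, Finset.sum_sub_distrib, sum_ind_lt htn]
  simp

lemma count_pairs (p : Fin n → Prop) [DecidablePred p] :
    (∑ i : Fin n, ∑ j : Fin n, if i ≠ j ∧ p i ∧ p j then (1:ℝ) else 0)
    = (∑ i : Fin n, if p i then (1:ℝ) else 0) * (∑ i : Fin n, if p i then (1:ℝ) else 0)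
      - (∑ i : Fin n, if p i then (1:ℝ) else 0) := by
  have key : ∀ i j : Fin n, (if i ≠ j ∧ p i ∧ p j then (1:ℝ) else 0)
      = (if p i then (1:ℝ) else 0) * (if p j then (1:ℝ) else 0)
        - (if i = j then (if p j then (1:ℝ) else 0) else 0) := by
    intro i j
    by_cases h : i = j
    · subst h; by_cases hp : p i <;> simp [hp]
    · by_cases hp : p i <;> by_cases hq : p j <;> simp [h, hp, hq]
  calc (∑ i : Fin n, ∑ j : Fin n, if i ≠ j ∧ p i ∧ p j then (1:ℝ) else 0)
      = ∑ i : Fin n, ((if p i then (1:ℝ) else 0) * (∑ j : Fin n, if p j then (1:ℝ) else 0)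
          - (if p i then (1:ℝ) else 0)) := by
        refine Finset.sum_congr rfl fun i _ => ?_
        rw [Finset.sum_congr rfl fun j _ => key i j, Finset.sum_sub_distrib,
          ← Finset.mul_sum, Finset.sum_ite_eq]
        simp
    _ = _ := by
        rw [Finset.sum_sub_distrib, ← Finset.sum_mul]

lemma swap2 {α : Type*} [Fintype α] (g : Fin n → Fin n → α → ℝ) [Fintype α] :
    (∑ a : Fin n, ∑ b : Fin n, ∑ π : α, g a b π)
    = ∑ π : α, ∑ a : Fin n, ∑ b : Fin n, g a b π := by
  calc (∑ a : Fin n, ∑ b : Fin n, ∑ π : α, g a b π)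
      = ∑ a : Fin n, ∑ π : α, ∑ b : Fin n, g a b π :=
        Finset.sum_congr rfl fun a _ => Finset.sum_comm
    _ = _ := Finset.sum_comm

lemma swap4 {α : Type*} [Fintype α] (g : Fin n → Fin n → Fin n → Fin n → α → ℝ) :
    (∑ a : Fin n, ∑ b : Fin n, ∑ c : Fin n, ∑ d : Fin n, ∑ π : α, g a b c d π)
    = ∑ π : α, ∑ a : Fin n, ∑ b : Fin n, ∑ c : Fin n, ∑ d : Fin n, g a b c d π := by
  calc (∑ a : Fin n, ∑ b : Fin n, ∑ c : Fin n, ∑ d : Fin n, ∑ π : α, g a b c d π)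
      = ∑ a : Fin n, ∑ b : Fin n, ∑ c : Fin n, ∑ π : α, ∑ d : Fin n, g a b c d π :=
        Finset.sum_congr rfl fun a _ => Finset.sum_congr rfl fun b _ =>
          Finset.sum_congr rfl fun c _ => Finset.sum_comm
    _ = ∑ a : Fin n, ∑ b : Fin n, ∑ π : α, ∑ c : Fin n, ∑ d : Fin n, g a b c d π :=
        Finset.sum_congr rfl fun a _ => Finset.sum_congr rfl fun b _ => Finset.sum_comm
    _ = ∑ a : Fin n, ∑ π : α, ∑ b : Fin n, ∑ c : Fin n, ∑ d : Fin n, g a b c d π :=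
        Finset.sum_congr rfl fun a _ => Finset.sum_comm
    _ = _ := Finset.sum_comm

lemma main_pair {i j : Fin n} (hij : i ≠ j) (K : Fin n → Fin n → ℝ) :
    (∑ π : Equiv.Perm (Fin n), K (π i) (π j)) * ((n : ℝ) * ((n : ℝ) - 1))
    = (Fintype.card (Equiv.Perm (Fin n)) : ℝ)
      * (∑ a : Fin n, ∑ b : Fin n, if a ≠ b then K a b else 0) := by
  calc (∑ π : Equiv.Perm (Fin n), K (π i) (π j)) * ((n : ℝ) * ((n : ℝ) - 1))
      = (∑ a : Fin n, ∑ b : Fin n, if a ≠ b then (1:ℝ) else 0)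
          * (∑ π : Equiv.Perm (Fin n), K (π i) (π j)) := by
        rw [pair_count]; ring
    _ = ∑ a : Fin n, ∑ b : Fin n,
          if a ≠ b then (∑ π : Equiv.Perm (Fin n), K (π a) (π b)) else 0 := by
        rw [Finset.sum_mul]
        refine Finset.sum_congr rfl fun a _ => ?_
        rw [Finset.sum_mul]
        refine Finset.sum_congr rfl fun b _ => ?_
        by_cases hab : a ≠ b
        · obtain ⟨σ, hσ1, hσ2⟩ := exists_perm_pair hab hij
          rw [if_pos hab, if_pos hab, one_mul, pair_const K σ hσ1 hσ2]
        · simp [hab]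
    _ = ∑ a : Fin n, ∑ b : Fin n, ∑ π : Equiv.Perm (Fin n),
          if a ≠ b then K (π a) (π b) else 0 :=
        Finset.sum_congr rfl fun a _ => Finset.sum_congr rfl fun b _ => (sum_if_const _).symm
    _ = ∑ π : Equiv.Perm (Fin n), ∑ a : Fin n, ∑ b : Fin n,
          if a ≠ b then K (π a) (π b) else 0 := swap2 _
    _ = ∑ π : Equiv.Perm (Fin n),
          (∑ a : Fin n, ∑ b : Fin n, if a ≠ b then K a b else 0) :=
        Finset.sum_congr rfl fun π _ => sum_pair_perm K π
    _ = _ := by rw [Finset.sum_const, Finset.card_univ, nsmul_eq_mul]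

lemma main_quad {i j u v : Fin n}
    (h1 : i ≠ j) (h2 : u ≠ v) (h3 : u ≠ i) (h4 : u ≠ j) (h5 : v ≠ i) (h6 : v ≠ j)
    (K₁ K₂ : Fin n → Fin n → ℝ) :
    (∑ π : Equiv.Perm (Fin n), K₁ (π i) (π j) * K₂ (π u) (π v))
        * ((n : ℝ) * ((n : ℝ) - 1) * ((n : ℝ) - 2) * ((n : ℝ) - 3))
    = (Fintype.card (Equiv.Perm (Fin n)) : ℝ)
      * (∑ a : Fin n, ∑ b : Fin n, ∑ c : Fin n, ∑ d : Fin n,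
          if a ≠ b ∧ c ≠ d ∧ c ≠ a ∧ c ≠ b ∧ d ≠ a ∧ d ≠ b then K₁ a b * K₂ c d else 0) := by
  calc (∑ π : Equiv.Perm (Fin n), K₁ (π i) (π j) * K₂ (π u) (π v))
          * ((n : ℝ) * ((n : ℝ) - 1) * ((n : ℝ) - 2) * ((n : ℝ) - 3))
      = (∑ a : Fin n, ∑ b : Fin n, ∑ c : Fin n, ∑ d : Fin n,
          if a ≠ b ∧ c ≠ d ∧ c ≠ a ∧ c ≠ b ∧ d ≠ a ∧ d ≠ b then (1:ℝ) else 0)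
          * (∑ π : Equiv.Perm (Fin n), K₁ (π i) (π j) * K₂ (π u) (π v)) := by
        rw [quad_count]; ring
    _ = ∑ a : Fin n, ∑ b : Fin n, ∑ c : Fin n, ∑ d : Fin n,
          if a ≠ b ∧ c ≠ d ∧ c ≠ a ∧ c ≠ b ∧ d ≠ a ∧ d ≠ b then
            (∑ π : Equiv.Perm (Fin n), K₁ (π a) (π b) * K₂ (π c) (π d)) else 0 := by
        rw [Finset.sum_mul]
        refine Finset.sum_congr rfl fun a _ => ?_
        rw [Finset.sum_mul]
        refine Finset.sum_congr rfl fun b _ => ?_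
        rw [Finset.sum_mul]
        refine Finset.sum_congr rfl fun c _ => ?_
        rw [Finset.sum_mul]
        refine Finset.sum_congr rfl fun d _ => ?_
        by_cases hd : a ≠ b ∧ c ≠ d ∧ c ≠ a ∧ c ≠ b ∧ d ≠ a ∧ d ≠ b
        · obtain ⟨g1, g2, g3, g4, g5, g6⟩ := hd
          obtain ⟨σ, hσ1, hσ2, hσ3, hσ4⟩ :=
            exists_perm_quad g1 g2 g3 g4 g5 g6 h1 h2 h3 h4 h5 h6
          rw [if_pos ⟨g1,g2,g3,g4,g5,g6⟩, if_pos ⟨g1,g2,g3,g4,g5,g6⟩, one_mul,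
            quad_const (fun x y z w => K₁ x y * K₂ z w) σ hσ1 hσ2 hσ3 hσ4]
        · simp [if_neg hd]
    _ = ∑ a : Fin n, ∑ b : Fin n, ∑ c : Fin n, ∑ d : Fin n, ∑ π : Equiv.Perm (Fin n),
          if a ≠ b ∧ c ≠ d ∧ c ≠ a ∧ c ≠ b ∧ d ≠ a ∧ d ≠ b then
            K₁ (π a) (π b) * K₂ (π c) (π d) else 0 :=
        Finset.sum_congr rfl fun a _ => Finset.sum_congr rfl fun b _ =>
          Finset.sum_congr rfl fun c _ => Finset.sum_congr rfl fun d _ =>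
            (sum_if_const _).symm
    _ = ∑ π : Equiv.Perm (Fin n), ∑ a : Fin n, ∑ b : Fin n, ∑ c : Fin n, ∑ d : Fin n,
          if a ≠ b ∧ c ≠ d ∧ c ≠ a ∧ c ≠ b ∧ d ≠ a ∧ d ≠ b then
            K₁ (π a) (π b) * K₂ (π c) (π d) else 0 := swap4 _
    _ = ∑ π : Equiv.Perm (Fin n),
          (∑ a : Fin n, ∑ b : Fin n, ∑ c : Fin n, ∑ d : Fin n,
            if a ≠ b ∧ c ≠ d ∧ c ≠ a ∧ c ≠ b ∧ d ≠ a ∧ d ≠ b then K₁ a b * K₂ c d else 0) :=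
        Finset.sum_congr rfl fun π _ => sum_quad_perm (fun x y z w => K₁ x y * K₂ z w) π
    _ = _ := by rw [Finset.sum_const, Finset.card_univ, nsmul_eq_mul]

lemma sum_perm_region (hn : (n:ℝ) * ((n:ℝ) - 1) ≠ 0)
    (p : Fin n → Prop) [DecidablePred p] (K : Fin n → Fin n → ℝ) :
    (∑ π : Equiv.Perm (Fin n), ∑ i : Fin n, ∑ j : Fin n,
        if i ≠ j ∧ p i ∧ p j then K (π i) (π j) else 0)
    = ((∑ i : Fin n, if p i then (1:ℝ) else 0) * (∑ i : Fin n, if p i then (1:ℝ) else 0)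
        - (∑ i : Fin n, if p i then (1:ℝ) else 0))
      * ((Fintype.card (Equiv.Perm (Fin n)) : ℝ)
          * (∑ a : Fin n, ∑ b : Fin n, if a ≠ b then K a b else 0)
          / ((n:ℝ) * ((n:ℝ) - 1))) := by
  rw [← swap2]
  have step : ∀ i j : Fin n,
      (∑ π : Equiv.Perm (Fin n), if i ≠ j ∧ p i ∧ p j then K (π i) (π j) else 0)
      = (if i ≠ j ∧ p i ∧ p j then (1:ℝ) else 0)
        * ((Fintype.card (Equiv.Perm (Fin n)) : ℝ)
            * (∑ a : Fin n, ∑ b : Fin n, if a ≠ b then K a b else 0)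
            / ((n:ℝ) * ((n:ℝ) - 1))) := by
    intro i j
    rw [sum_if_const]
    by_cases h : i ≠ j ∧ p i ∧ p j
    · rw [if_pos h, if_pos h, one_mul, eq_div_iff hn, main_pair h.1 K]
    · rw [if_neg h, if_neg h, zero_mul]
  rw [Finset.sum_congr rfl fun i _ => Finset.sum_congr rfl fun j _ => step i j]
  rw [← count_pairs p]
  rw [Finset.sum_mul]
  exact Finset.sum_congr rfl fun i _ => (Finset.sum_mul _ _ _).symm

lemma sum_perm_region2 (hn : (n:ℝ) * ((n:ℝ) - 1) * ((n:ℝ) - 2) * ((n:ℝ) - 3) ≠ 0)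
    (p q : Fin n → Prop) [DecidablePred p] [DecidablePred q]
    (hpq : ∀ i, p i → q i → False) (K₁ K₂ : Fin n → Fin n → ℝ) :
    (∑ π : Equiv.Perm (Fin n),
        (∑ i : Fin n, ∑ j : Fin n, if i ≠ j ∧ p i ∧ p j then K₁ (π i) (π j) else 0)
        * (∑ u : Fin n, ∑ v : Fin n, if u ≠ v ∧ q u ∧ q v then K₂ (π u) (π v) else 0))
    = ((∑ i : Fin n, if p i then (1:ℝ) else 0) * (∑ i : Fin n, if p i then (1:ℝ) else 0)
        - (∑ i : Fin n, if p i then (1:ℝ) else 0))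
      * ((∑ i : Fin n, if q i then (1:ℝ) else 0) * (∑ i : Fin n, if q i then (1:ℝ) else 0)
        - (∑ i : Fin n, if q i then (1:ℝ) else 0))
      * ((Fintype.card (Equiv.Perm (Fin n)) : ℝ)
          * (∑ a : Fin n, ∑ b : Fin n, ∑ c : Fin n, ∑ d : Fin n,
              if a ≠ b ∧ c ≠ d ∧ c ≠ a ∧ c ≠ b ∧ d ≠ a ∧ d ≠ b then K₁ a b * K₂ c d else 0)
          / ((n:ℝ) * ((n:ℝ) - 1) * ((n:ℝ) - 2) * ((n:ℝ) - 3))) := by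
  have expand : ∀ π : Equiv.Perm (Fin n),
      (∑ i : Fin n, ∑ j : Fin n, if i ≠ j ∧ p i ∧ p j then K₁ (π i) (π j) else 0)
        * (∑ u : Fin n, ∑ v : Fin n, if u ≠ v ∧ q u ∧ q v then K₂ (π u) (π v) else 0)
      = ∑ i : Fin n, ∑ u : Fin n, ∑ j : Fin n, ∑ v : Fin n,
          if (i ≠ j ∧ p i ∧ p j) ∧ (u ≠ v ∧ q u ∧ q v)
          then K₁ (π i) (π j) * K₂ (π u) (π v) else 0 := by
    intro π
    rw [Fintype.sum_mul_sum]
    refine Finset.sum_congr rfl fun i _ => Finset.sum_congr rfl fun u _ => ?_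
    rw [Fintype.sum_mul_sum]
    refine Finset.sum_congr rfl fun j _ => Finset.sum_congr rfl fun v _ => ?_
    by_cases h1 : i ≠ j ∧ p i ∧ p j <;> by_cases h2 : u ≠ v ∧ q u ∧ q v <;>
      simp [h1, h2]
  rw [Finset.sum_congr rfl fun π _ => expand π, ← swap4]
  have step : ∀ i u j v : Fin n,
      (∑ π : Equiv.Perm (Fin n),
        if (i ≠ j ∧ p i ∧ p j) ∧ (u ≠ v ∧ q u ∧ q v)
        then K₁ (π i) (π j) * K₂ (π u) (π v) else 0)
      = (if (i ≠ j ∧ p i ∧ p j) ∧ (u ≠ v ∧ q u ∧ q v) then (1:ℝ) else 0)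
        * ((Fintype.card (Equiv.Perm (Fin n)) : ℝ)
          * (∑ a : Fin n, ∑ b : Fin n, ∑ c : Fin n, ∑ d : Fin n,
              if a ≠ b ∧ c ≠ d ∧ c ≠ a ∧ c ≠ b ∧ d ≠ a ∧ d ≠ b then K₁ a b * K₂ c d else 0)
          / ((n:ℝ) * ((n:ℝ) - 1) * ((n:ℝ) - 2) * ((n:ℝ) - 3))) := by
    intro i u j v
    rw [sum_if_const]
    by_cases h : (i ≠ j ∧ p i ∧ p j) ∧ (u ≠ v ∧ q u ∧ q v)
    · obtain ⟨⟨hij, hpi, hpj⟩, ⟨huv, hqu, hqv⟩⟩ := h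
      have hui : u ≠ i := fun e => hpq i (hpi) (e ▸ hqu)
      have huj : u ≠ j := fun e => hpq j (hpj) (e ▸ hqu)
      have hvi : v ≠ i := fun e => hpq i (hpi) (e ▸ hqv)
      have hvj : v ≠ j := fun e => hpq j (hpj) (e ▸ hqv)
      rw [if_pos ⟨⟨hij, hpi, hpj⟩, ⟨huv, hqu, hqv⟩⟩,
        if_pos ⟨⟨hij, hpi, hpj⟩, ⟨huv, hqu, hqv⟩⟩, one_mul, eq_div_iff hn,
        main_quad hij huv hui huj hvi hvj K₁ K₂]
    · rw [if_neg h, if_neg h, zero_mul]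
  rw [Finset.sum_congr rfl fun i _ => Finset.sum_congr rfl fun u _ =>
    Finset.sum_congr rfl fun j _ => Finset.sum_congr rfl fun v _ => step i u j v]
  have split : (∑ i : Fin n, ∑ u : Fin n, ∑ j : Fin n, ∑ v : Fin n,
      if (i ≠ j ∧ p i ∧ p j) ∧ (u ≠ v ∧ q u ∧ q v) then (1:ℝ) else 0)
      = (∑ i : Fin n, ∑ j : Fin n, if i ≠ j ∧ p i ∧ p j then (1:ℝ) else 0)
        * (∑ u : Fin n, ∑ v : Fin n, if u ≠ v ∧ q u ∧ q v then (1:ℝ) else 0) := by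
    rw [Fintype.sum_mul_sum]
    refine Finset.sum_congr rfl fun i _ => Finset.sum_congr rfl fun u _ => ?_
    rw [Fintype.sum_mul_sum]
    refine Finset.sum_congr rfl fun j _ => Finset.sum_congr rfl fun v _ => ?_
    by_cases h1 : i ≠ j ∧ p i ∧ p j <;> by_cases h2 : u ≠ v ∧ q u ∧ q v <;> simp [h1, h2]
  calc (∑ i : Fin n, ∑ u : Fin n, ∑ j : Fin n, ∑ v : Fin n,
      (if (i ≠ j ∧ p i ∧ p j) ∧ (u ≠ v ∧ q u ∧ q v) then (1:ℝ) else 0) * _)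
      = (∑ i : Fin n, ∑ u : Fin n, ∑ j : Fin n, ∑ v : Fin n,
          if (i ≠ j ∧ p i ∧ p j) ∧ (u ≠ v ∧ q u ∧ q v) then (1:ℝ) else 0) * _ := by
        rw [Finset.sum_mul]
        refine Finset.sum_congr rfl fun i _ => ?_
        rw [Finset.sum_mul]
        refine Finset.sum_congr rfl fun u _ => ?_
        rw [Finset.sum_mul]
        refine Finset.sum_congr rfl fun j _ => ?_
        rw [Finset.sum_mul]
    _ = _ := by rw [split, count_pairs p, count_pairs q]

lemma exp_product {α : Type*} [Fintype α] (cA cB : ℝ) (X Y : α → ℝ) :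
    (∑ π : α, (cA * X π) * (cB * Y π)) = cA * cB * ∑ π : α, X π * Y π := by
  rw [Finset.mul_sum]
  exact Finset.sum_congr rfl fun π _ => by ring


end Aux

theorem cov_alpha_beta (n t : ℕ) (ht : 2 ≤ t) (htn : t + 2 ≤ n)
    (K₁ K₂ : Fin n → Fin n → ℝ)
    (hsymm₁ : ∀ i j, K₁ i j = K₁ j i) (hdiag₁ : ∀ i, K₁ i i = 0)
    (hsymm₂ : ∀ i j, K₂ i j = K₂ j i) (hdiag₂ : ∀ i, K₂ i i = 0) :
    permExp n (fun π => alphaStat n t K₁ π * betaStat n t K₂ π)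
      - permExp n (alphaStat n t K₁) * permExp n (betaStat n t K₂)
    = (∑ i : Fin n, ∑ j : Fin n, ∑ u : Fin n, ∑ v : Fin n,
        if i ≠ j ∧ u ≠ v ∧ u ≠ i ∧ u ≠ j ∧ v ≠ i ∧ v ≠ j
        then K₁ i j * K₂ u v else 0)
        / ((n : ℝ) * ((n : ℝ) - 1) * ((n : ℝ) - 2) * ((n : ℝ) - 3))
      - ((1 / ((n : ℝ) * ((n : ℝ) - 1))) *
          ∑ i : Fin n, ∑ j : Fin n, if i ≠ j then K₁ i j else 0) *
        ((1 / ((n : ℝ) * ((n : ℝ) - 1))) *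
          ∑ i : Fin n, ∑ j : Fin n, if i ≠ j then K₂ i j else 0) := by
  classical
  have hcard : (Fintype.card (Equiv.Perm (Fin n)) : ℝ) ≠ 0 :=
    Nat.cast_ne_zero.mpr Fintype.card_ne_zero
  have htn' : t ≤ n := by omega
  have ht2 : (2:ℝ) ≤ (t:ℝ) := by exact_mod_cast ht
  have hnt2 : (t:ℝ) + 2 ≤ (n:ℝ) := by exact_mod_cast htn
  have h1 : (t:ℝ) ≠ 0 := by intro h; rw [h] at ht2; linarith
  have h2 : (t:ℝ) - 1 ≠ 0 := by intro h; nlinarith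
  have h3 : (n:ℝ) - t ≠ 0 := by intro h; nlinarith
  have h4 : (n:ℝ) - (t:ℝ) - 1 ≠ 0 := by intro h; nlinarith
  have h5 : (n:ℝ) ≠ 0 := by intro h; nlinarith
  have h6 : (n:ℝ) - 1 ≠ 0 := by intro h; nlinarith
  have h7 : (n:ℝ) - 2 ≠ 0 := by intro h; nlinarith
  have h8 : (n:ℝ) - 3 ≠ 0 := by intro h; nlinarith
  have hN2 : (n:ℝ) * ((n:ℝ) - 1) ≠ 0 := mul_ne_zero h5 h6
  have hN4 : (n:ℝ) * ((n:ℝ) - 1) * ((n:ℝ) - 2) * ((n:ℝ) - 3) ≠ 0 :=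
    mul_ne_zero (mul_ne_zero hN2 h7) h8
  have hdisj : ∀ i : Fin n, (i:ℕ) < t → t ≤ (i:ℕ) → False := fun i a b => by omega
  have sA := sum_ind_lt (n := n) (t := t) htn'
  have sB := sum_ind_ge (n := n) (t := t) htn'
  have hA : (∑ π : Equiv.Perm (Fin n), alphaStat n t K₁ π)
      = (1 / ((t:ℝ) * ((t:ℝ) - 1))) *
        (((t:ℝ) * (t:ℝ) - (t:ℝ)) *
          ((Fintype.card (Equiv.Perm (Fin n)) : ℝ)
            * (∑ a : Fin n, ∑ b : Fin n, if a ≠ b then K₁ a b else 0)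
            / ((n:ℝ) * ((n:ℝ) - 1)))) := by
    unfold alphaStat
    rw [← Finset.mul_sum, sum_perm_region hN2 (fun i : Fin n => (i:ℕ) < t) K₁, sA]
  have hB : (∑ π : Equiv.Perm (Fin n), betaStat n t K₂ π)
      = (1 / (((n:ℝ) - t) * ((n:ℝ) - t - 1))) *
        ((((n:ℝ) - t) * ((n:ℝ) - t) - ((n:ℝ) - t)) *
          ((Fintype.card (Equiv.Perm (Fin n)) : ℝ)
            * (∑ a : Fin n, ∑ b : Fin n, if a ≠ b then K₂ a b else 0)
            / ((n:ℝ) * ((n:ℝ) - 1)))) := by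
    unfold betaStat
    rw [← Finset.mul_sum, sum_perm_region hN2 (fun i : Fin n => t ≤ (i:ℕ)) K₂, sB]
  have hAB : (∑ π : Equiv.Perm (Fin n), alphaStat n t K₁ π * betaStat n t K₂ π)
      = (1 / ((t:ℝ) * ((t:ℝ) - 1))) * (1 / (((n:ℝ) - t) * ((n:ℝ) - t - 1))) *
        ((((t:ℝ) * (t:ℝ) - (t:ℝ)) * ((((n:ℝ) - t) * ((n:ℝ) - t) - ((n:ℝ) - t))))
          * ((Fintype.card (Equiv.Perm (Fin n)) : ℝ)
            * (∑ a : Fin n, ∑ b : Fin n, ∑ c : Fin n, ∑ d : Fin n,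
                if a ≠ b ∧ c ≠ d ∧ c ≠ a ∧ c ≠ b ∧ d ≠ a ∧ d ≠ b
                then K₁ a b * K₂ c d else 0)
            / ((n:ℝ) * ((n:ℝ) - 1) * ((n:ℝ) - 2) * ((n:ℝ) - 3)))) := by
    unfold alphaStat betaStat
    rw [exp_product,
      sum_perm_region2 hN4 (fun i : Fin n => (i:ℕ) < t) (fun i : Fin n => t ≤ (i:ℕ))
        hdisj K₁ K₂, sA, sB]
  simp only [permExp]
  rw [hAB, hA, hB]
  field_simp
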